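/- Let g be a strictly increasing convex distortion function and set α_{n−1} = g((n−1)/n). Then for every α with α_{n−1} < α < 1, the dual norm of the scaled generalized-ES norm ⟨⟨·⟩⟩_α^{S,g} is the L₁-norm: for all x ∈ ℝⁿ, ⟨⟨x⟩⟩_α^{S,g,*} = ‖x‖₁ = Σ_{i=1}^n |x_i|. -/

import Mathlib

open Finset

/-- The absolute values of the components of `x`, arranged in increasing order:
`absSorted x i` is `|x|_(i+1)` in the paper's notation. -/
noncomputable def absSorted {n : ℕ} (x : Fin n → ℝ) : Fin n → ℝ :=
  fun i => |x (Tuple.sort (fun j => |x j|) i)|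

/-- `coeff n g i = g((i+1)/n) - g(i/n)`, the paper's `c_{i+1}`. -/
noncomputable def coeff (n : ℕ) (g : ℝ → ℝ) (i : Fin n) : ℝ :=
  g (((i : ℕ) + 1 : ℝ) / n) - g (((i : ℕ) : ℝ) / n)

/-- The objective function whose infimum over `t` defines the scaled generalized-ES norm. -/
noncomputable def sgesObj {n : ℕ} (g : ℝ → ℝ) (α : ℝ) (x : Fin n → ℝ) (t : ℝ) : ℝ :=
  t + (1 - α)⁻¹ * ∑ i, coeff n g i * max (absSorted x i - t) 0

/-- The scaled generalized-ES norm `⟨⟨x⟩⟩_α^{S,g}`. -/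
noncomputable def sges {n : ℕ} (g : ℝ → ℝ) (α : ℝ) (x : Fin n → ℝ) : ℝ :=
  ⨅ t : ℝ, sgesObj g α x t

/-- The non-scaled generalized-ES norm `⟨⟨x⟩⟩_α^{g} = n(1-α)⟨⟨x⟩⟩_α^{S,g}`. -/
noncomputable def nges {n : ℕ} (g : ℝ → ℝ) (α : ℝ) (x : Fin n → ℝ) : ℝ :=
  (n : ℝ) * (1 - α) * sges g α x

/-- The dual norm of a (norm) functional `N` on `ℝⁿ`. -/
noncomputable def dualNorm {n : ℕ} (N : (Fin n → ℝ) → ℝ) (y : Fin n → ℝ) : ℝ :=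
  sSup {r : ℝ | ∃ x : Fin n → ℝ, N x ≤ 1 ∧ r = ∑ i, x i * y i}

/-- The ordered weighted L1 (OWL) norm. -/
noncomputable def owl {n : ℕ} (w : Fin n → ℝ) (x : Fin n → ℝ) : ℝ :=
  ∑ i, w i * absSorted x i

lemma absSorted_mono {n : ℕ} (x : Fin n → ℝ) : Monotone (absSorted x) :=
  Tuple.monotone_sort (fun j => |x j|)

lemma abs_le_absSorted {n : ℕ} (x : Fin n → ℝ) (i : Fin n) (hn : 1 ≤ n) :
    |x i| ≤ absSorted x ⟨n - 1, by omega⟩ := by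
  have h : |x i| = absSorted x ((Tuple.sort (fun j => |x j|))⁻¹ i) := by
    simp [absSorted]
  rw [h]
  apply absSorted_mono x
  show ((Tuple.sort (fun j => |x j|))⁻¹ i : Fin n).val ≤ n - 1
  have := ((Tuple.sort (fun j => |x j|))⁻¹ i).isLt
  omega

lemma coeff_nonneg {n : ℕ} (g : ℝ → ℝ) (hg_mono : StrictMonoOn g (Set.Icc 0 1)) (i : Fin n) :
    0 ≤ coeff n g i := by
  have hn : (0 : ℝ) < n := by exact_mod_cast i.pos
  have hi : ((i : ℕ) : ℝ) + 1 ≤ n := by exact_mod_cast i.isLt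
  have m1 : ((i : ℕ) : ℝ) / n ∈ Set.Icc (0 : ℝ) 1 :=
    ⟨by positivity, by rw [div_le_one hn]; linarith⟩
  have m2 : (((i : ℕ) : ℝ) + 1) / n ∈ Set.Icc (0 : ℝ) 1 :=
    ⟨by positivity, by rw [div_le_one hn]; linarith⟩
  have hle : ((i : ℕ) : ℝ) / n ≤ (((i : ℕ) : ℝ) + 1) / n := by gcongr; linarith
  exact sub_nonneg.2 (hg_mono.monotoneOn m1 m2 hle)

lemma coeff_last {n : ℕ} (hn : 1 ≤ n) (g : ℝ → ℝ) (hg1 : g 1 = 1) :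
    coeff n g ⟨n - 1, by omega⟩ = 1 - g (((n : ℝ) - 1) / n) := by
  have hn' : (n : ℝ) ≠ 0 := by
    have : (0:ℝ) < n := by exact_mod_cast hn
    linarith
  have hcast : (((n - 1 : ℕ) : ℝ)) = (n : ℝ) - 1 := by
    have : (1:ℝ) ≤ (n:ℝ) := by exact_mod_cast hn
    push_cast [Nat.cast_sub hn]
    ring
  simp only [coeff, hcast]
  rw [show ((n : ℝ) - 1 + 1) / n = 1 by field_simp; ring, hg1]

/-- Key: `sges g α x` equals the largest absolute component. -/
lemma sges_eq_max {n : ℕ} (hn : 1 ≤ n) (g : ℝ → ℝ)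
    (hg_mono : StrictMonoOn g (Set.Icc 0 1)) (hg1 : g 1 = 1)
    (α : ℝ) (hα1 : g (((n : ℝ) - 1) / n) < α) (hα2 : α < 1) (x : Fin n → ℝ) :
    sges g α x = absSorted x ⟨n - 1, by omega⟩ := by
  set M := absSorted x ⟨n - 1, by omega⟩ with hM
  have hα : (0:ℝ) < 1 - α := by linarith
  have hclast : 1 - α ≤ coeff n g ⟨n - 1, by omega⟩ := by
    rw [coeff_last hn g hg1]; linarith
  have hlb : ∀ t : ℝ, M ≤ sgesObj g α x t := by
    intro t
    have hsumub : ∀ i : Fin n, 0 ≤ coeff n g i * max (absSorted x i - t) 0 := fun i =>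
      mul_nonneg (coeff_nonneg g hg_mono i) (le_max_right _ _)
    rcases le_or_gt M t with h | h
    · have : 0 ≤ ∑ i, coeff n g i * max (absSorted x i - t) 0 := Finset.sum_nonneg fun i _ => hsumub i
      have := mul_nonneg (le_of_lt (inv_pos.2 hα)) this
      unfold sgesObj; linarith
    · have hsingle : coeff n g ⟨n - 1, by omega⟩ * max (M - t) 0 ≤
          ∑ i, coeff n g i * max (absSorted x i - t) 0 :=
        Finset.single_le_sum (fun i _ => hsumub i) (Finset.mem_univ _)
      have hmax : max (M - t) 0 = M - t := max_eq_left (by linarith)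
      rw [hmax] at hsingle
      have h1 : (1 - α) * (M - t) ≤ coeff n g ⟨n - 1, by omega⟩ * (M - t) :=
        mul_le_mul_of_nonneg_right hclast (by linarith)
      have h2 : (1 - α)⁻¹ * ((1 - α) * (M - t)) ≤
          (1 - α)⁻¹ * ∑ i, coeff n g i * max (absSorted x i - t) 0 := by
        apply mul_le_mul_of_nonneg_left _ (le_of_lt (inv_pos.2 hα))
        linarith
      rw [inv_mul_cancel_left₀ (ne_of_gt hα)] at h2
      unfold sgesObj; linarith
  apply le_antisymm
  · have : sgesObj g α x M = M := by
      unfold sgesObj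
      have : ∀ i : Fin n, coeff n g i * max (absSorted x i - M) 0 = 0 := by
        intro i
        have hle : absSorted x i ≤ M := absSorted_mono x (by
          show (i : ℕ) ≤ n - 1
          have := i.isLt; omega)
        rw [max_eq_right (by linarith), mul_zero]
      rw [Finset.sum_congr rfl (fun i _ => this i)]
      simp
    calc sges g α x ≤ sgesObj g α x M := ciInf_le ⟨M, by rintro _ ⟨t, rfl⟩; exact hlb t⟩ M
      _ = M := this
  · exact le_ciInf hlb

/-- for a strictly increasing convex distortion function and
`g((n-1)/n) < α < 1`, the dual norm of the scaled generalized-ES norm is the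
L1-norm. -/
theorem stmt18 (n : ℕ) (hn : 1 ≤ n) (g : ℝ → ℝ)
    (hg_mono : StrictMonoOn g (Set.Icc 0 1)) (hg_conv : ConvexOn ℝ (Set.Icc 0 1) g)
    (hg0 : g 0 = 0) (hg1 : g 1 = 1)
    (α : ℝ) (hα1 : g (((n : ℝ) - 1) / n) < α) (hα2 : α < 1) (x : Fin n → ℝ) :
    dualNorm (sges g α) x = ∑ i, |x i| := by
  have hsges : ∀ y : Fin n → ℝ, sges g α y = absSorted y ⟨n - 1, by omega⟩ :=
    fun y => sges_eq_max hn g hg_mono hg1 α hα1 hα2 y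
  set s : Fin n → ℝ := fun i => if x i < 0 then -1 else 1 with hs
  have hsabs : ∀ i, |s i| = 1 := by
    intro i; by_cases h : x i < 0 <;> simp [hs, h]
  have hmem : (∑ i, |x i|) ∈ {r : ℝ | ∃ y : Fin n → ℝ, sges g α y ≤ 1 ∧ r = ∑ i, y i * x i} := by
    refine ⟨s, ?_, ?_⟩
    · rw [hsges s]
      show |s (Tuple.sort (fun j => |s j|) _)| ≤ 1
      rw [hsabs]
    · refine Finset.sum_congr rfl fun i _ => ?_
      by_cases h : x i < 0
      · simp [hs, h, abs_of_neg h]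
      · simp [hs, h, abs_of_nonneg (not_lt.1 h)]
  have hub : ∀ r ∈ {r : ℝ | ∃ y : Fin n → ℝ, sges g α y ≤ 1 ∧ r = ∑ i, y i * x i},
      r ≤ ∑ i, |x i| := by
    rintro r ⟨y, hy, rfl⟩
    rw [hsges y] at hy
    calc ∑ i, y i * x i ≤ ∑ i, |y i * x i| :=
          Finset.sum_le_sum fun i _ => le_abs_self _
      _ ≤ ∑ i, |x i| := by
          refine Finset.sum_le_sum fun i _ => ?_
          rw [abs_mul]
          have h1 : |y i| ≤ 1 := le_trans (abs_le_absSorted y i hn) hy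
          nlinarith [abs_nonneg (x i), abs_nonneg (y i)]
  exact le_antisymm (csSup_le ⟨_, hmem⟩ hub) (le_csSup ⟨_, hub⟩ hmem)
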